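/- Let N ≥ 1, fix a coordinate x₀, and let P : ℝ^N → ℝ^N satisfy monotonicity, strict monotonicity, and constant additivity. Given f ∈ ℝ^N, set f_n := P^n f − P^n f(x₀)·𝟙. If the sequence (f_n) has a finite accumulation point g ∈ ℝ^N, then f_n → g in the sup norm as n → ∞. -/

import Mathlib

open Filter Finset

namespace Stmt1Aux

variable {N : ℕ}

lemma une (x₀ : Fin N) : (univ : Finset (Fin N)).Nonempty := ⟨x₀, mem_univ _⟩

noncomputable def mx (x₀ : Fin N) (h : Fin N → ℝ) : ℝ := univ.sup' (une x₀) h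
noncomputable def mn (x₀ : Fin N) (h : Fin N → ℝ) : ℝ := univ.inf' (une x₀) h
noncomputable def osc (x₀ : Fin N) (h : Fin N → ℝ) : ℝ := mx x₀ h - mn x₀ h

variable {x₀ : Fin N}

lemma le_mx (h : Fin N → ℝ) (x : Fin N) : h x ≤ mx x₀ h := Finset.le_sup' h (mem_univ x)
lemma mn_le (h : Fin N → ℝ) (x : Fin N) : mn x₀ h ≤ h x := Finset.inf'_le h (mem_univ x)
lemma mx_le {h : Fin N → ℝ} {c : ℝ} (H : ∀ x, h x ≤ c) : mx x₀ h ≤ c :=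
  Finset.sup'_le _ _ (fun x _ => H x)
lemma le_mn {h : Fin N → ℝ} {c : ℝ} (H : ∀ x, c ≤ h x) : c ≤ mn x₀ h :=
  Finset.le_inf' _ _ (fun x _ => H x)
lemma exists_mx (h : Fin N → ℝ) : ∃ x, h x = mx x₀ h := by
  obtain ⟨b, _, hb⟩ := Finset.exists_mem_eq_sup' (une x₀) h
  exact ⟨b, hb.symm⟩
lemma exists_mn (h : Fin N → ℝ) : ∃ x, h x = mn x₀ h := by
  obtain ⟨b, _, hb⟩ := Finset.exists_mem_eq_inf' (une x₀) h
  exact ⟨b, hb.symm⟩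

lemma mn_le_mx (h : Fin N → ℝ) : mn x₀ h ≤ mx x₀ h :=
  (mn_le h x₀).trans (le_mx h x₀)

lemma osc_nonneg (h : Fin N → ℝ) : 0 ≤ osc x₀ h := by
  have := mn_le_mx (x₀ := x₀) h; simp only [osc]; linarith

lemma abs_le_osc {h : Fin N → ℝ} (h0 : h x₀ = 0) (x : Fin N) : |h x| ≤ osc x₀ h := by
  have h1 := le_mx (x₀ := x₀) h x
  have h2 := mn_le (x₀ := x₀) h x
  have h3 := le_mx (x₀ := x₀) h x₀
  have h4 := mn_le (x₀ := x₀) h x₀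
  rw [h0] at h3 h4
  rw [abs_le]; constructor <;> simp only [osc] <;> linarith

lemma osc_add_le (u v : Fin N → ℝ) : osc x₀ (fun x => u x + v x) ≤ osc x₀ u + osc x₀ v := by
  have h1 : mx x₀ (fun x => u x + v x) ≤ mx x₀ u + mx x₀ v :=
    mx_le (fun x => add_le_add (le_mx u x) (le_mx v x))
  have h2 : mn x₀ u + mn x₀ v ≤ mn x₀ (fun x => u x + v x) :=
    le_mn (fun x => add_le_add (mn_le u x) (mn_le v x))
  simp only [osc]; linarith

lemma mx_sub_const (h : Fin N → ℝ) (c : ℝ) : mx x₀ (fun x => h x - c) = mx x₀ h - c := by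
  apply le_antisymm
  · exact mx_le (fun x => by linarith [le_mx (x₀ := x₀) h x])
  · have : mx x₀ h ≤ mx x₀ (fun x => h x - c) + c :=
      mx_le (fun x => by linarith [le_mx (x₀ := x₀) (fun x => h x - c) x])
    linarith

lemma mn_sub_const (h : Fin N → ℝ) (c : ℝ) : mn x₀ (fun x => h x - c) = mn x₀ h - c := by
  apply le_antisymm
  · have : mn x₀ (fun x => h x - c) + c ≤ mn x₀ h :=
      le_mn (fun x => by linarith [mn_le (x₀ := x₀) (fun x => h x - c) x])
    linarith
  · exact le_mn (fun x => by linarith [mn_le (x₀ := x₀) h x])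

lemma mx_const (c : ℝ) : mx x₀ (fun _ => c) = c :=
  le_antisymm (mx_le (fun _ => le_rfl)) (by simpa using le_mx (x₀ := x₀) (fun _ => c) x₀)
lemma mn_const (c : ℝ) : mn x₀ (fun _ => c) = c :=
  le_antisymm (by simpa using mn_le (x₀ := x₀) (fun _ => c) x₀) (le_mn (fun _ => le_rfl))
lemma osc_const_zero (c : ℝ) : osc x₀ (fun _ => c) = 0 := by
  simp [osc, mx_const, mn_const]

lemma tendsto_mx {u : ℕ → Fin N → ℝ} {v : Fin N → ℝ}
    (hu : ∀ x, Tendsto (fun k => u k x) atTop (nhds (v x))) :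
    Tendsto (fun k => mx x₀ (u k)) atTop (nhds (mx x₀ v)) :=
  Filter.Tendsto.finset_sup'_nhds_apply (une x₀) (fun i _ => hu i)

lemma tendsto_mn {u : ℕ → Fin N → ℝ} {v : Fin N → ℝ}
    (hu : ∀ x, Tendsto (fun k => u k x) atTop (nhds (v x))) :
    Tendsto (fun k => mn x₀ (u k)) atTop (nhds (mn x₀ v)) :=
  Filter.Tendsto.finset_inf'_nhds_apply (une x₀) (fun i _ => hu i)

lemma tendsto_osc {u : ℕ → Fin N → ℝ} {v : Fin N → ℝ}
    (hu : ∀ x, Tendsto (fun k => u k x) atTop (nhds (v x))) :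
    Tendsto (fun k => osc x₀ (u k)) atTop (nhds (osc x₀ v)) :=
  (tendsto_mx hu).sub (tendsto_mn hu)

/-! ### P layer -/

section Pmap

variable (P : (Fin N → ℝ) → (Fin N → ℝ)) (x₀ : Fin N)

noncomputable def Q (h : Fin N → ℝ) : Fin N → ℝ := fun x => P h x - P h x₀

variable {P}
variable (mono : ∀ f g : Fin N → ℝ, (∀ x, g x ≤ f x) → ∀ x, P g x ≤ P f x)
variable (cadd : ∀ (f : Fin N → ℝ) (c : ℝ), P (fun x => f x + c) = fun x => P f x + c)

include mono cadd in
lemma sandwich_hi (a b : Fin N → ℝ) (x : Fin N) :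
    P a x - P b x ≤ mx x₀ (fun y => a y - b y) := by
  set M := mx x₀ (fun y => a y - b y) with hM
  have hle : ∀ y, a y ≤ b y + M := fun y => by
    have : a y - b y ≤ M := le_mx (x₀ := x₀) (fun y => a y - b y) y; linarith
  have h1 := mono (fun y => b y + M) a hle x
  rw [cadd b M] at h1
  have h1' : P a x ≤ P b x + M := h1
  linarith

include mono cadd in
lemma sandwich_lo (a b : Fin N → ℝ) (x : Fin N) :
    mn x₀ (fun y => a y - b y) ≤ P a x - P b x := by
  set m := mn x₀ (fun y => a y - b y) with hm
  have hle : ∀ y, b y + m ≤ a y := fun y => by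
    have : m ≤ a y - b y := mn_le (x₀ := x₀) (fun y => a y - b y) y; linarith
  have h1 := mono a (fun y => b y + m) hle x
  rw [cadd b m] at h1
  have h1' : P b x + m ≤ P a x := h1
  linarith

variable (smono : ∀ f g : Fin N → ℝ, (∀ x, g x ≤ f x) → ∀ x, g x < f x → P g x < P f x)

include smono cadd in
lemma strict_hi {a b : Fin N → ℝ} {M : ℝ} (hle : ∀ y, a y - b y ≤ M) {x : Fin N}
    (hx : a x - b x < M) : P a x - P b x < M := by
  have h1 := smono (fun y => b y + M) a
    (fun y => show a y ≤ b y + M by linarith [hle y]) x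
    (show a x < b x + M by linarith)
  rw [cadd b M] at h1
  have h1' : P a x < P b x + M := h1
  linarith

include smono cadd in
lemma strict_lo {a b : Fin N → ℝ} {m : ℝ} (hle : ∀ y, m ≤ a y - b y) {x : Fin N}
    (hx : m < a x - b x) : m < P a x - P b x := by
  have h1 := smono a (fun y => b y + m)
    (fun y => show b y + m ≤ a y by linarith [hle y]) x
    (show b x + m < a x by linarith)
  rw [cadd b m] at h1
  have h1' : P b x + m < P a x := h1
  linarith

include mono cadd in
lemma osc_Q_le (a b : Fin N → ℝ) :
    osc x₀ (fun x => Q P x₀ a x - Q P x₀ b x) ≤ osc x₀ (fun x => a x - b x) := by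
  set M := mx x₀ (fun y => a y - b y)
  set m := mn x₀ (fun y => a y - b y)
  set c := P a x₀ - P b x₀
  have hform : ∀ x, Q P x₀ a x - Q P x₀ b x = (P a x - P b x) - c := by
    intro x; simp only [Q, c]; ring
  have h1 : mx x₀ (fun x => Q P x₀ a x - Q P x₀ b x) ≤ M - c :=
    mx_le (fun x => by rw [hform x]; linarith [sandwich_hi x₀ mono cadd a b x])
  have h2 : m - c ≤ mn x₀ (fun x => Q P x₀ a x - Q P x₀ b x) :=
    le_mn (fun x => by rw [hform x]; linarith [sandwich_lo x₀ mono cadd a b x])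
  simp only [osc]; linarith

include mono cadd in
lemma osc_Qiter_le (k : ℕ) (a b : Fin N → ℝ) :
    osc x₀ (fun x => (Q P x₀)^[k] a x - (Q P x₀)^[k] b x) ≤ osc x₀ (fun x => a x - b x) := by
  induction k with
  | zero => simp
  | succ k ih =>
    rw [Function.iterate_succ_apply', Function.iterate_succ_apply']
    exact (osc_Q_le x₀ mono cadd _ _).trans ih

include mono cadd in
lemma tendsto_Q {u : ℕ → Fin N → ℝ} {v : Fin N → ℝ}
    (hu : ∀ x, Tendsto (fun k => u k x) atTop (nhds (v x))) :
    ∀ x, Tendsto (fun k => Q P x₀ (u k) x) atTop (nhds (Q P x₀ v x)) := by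
  have hd : ∀ x, Tendsto (fun k => u k x - v x) atTop (nhds 0) := by
    intro x; simpa using (hu x).sub (tendsto_const_nhds (x := v x))
  have hmx : Tendsto (fun k => mx x₀ (fun x => u k x - v x)) atTop (nhds 0) := by
    have := tendsto_mx (x₀ := x₀) hd
    rwa [mx_const] at this
  have hmn : Tendsto (fun k => mn x₀ (fun x => u k x - v x)) atTop (nhds 0) := by
    have := tendsto_mn (x₀ := x₀) hd
    rwa [mn_const] at this
  have key : ∀ x, Tendsto (fun k => P (u k) x - P v x) atTop (nhds 0) := by
    intro x
    exact tendsto_of_tendsto_of_tendsto_of_le_of_le hmn hmx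
      (fun k => sandwich_lo x₀ mono cadd (u k) v x)
      (fun k => sandwich_hi x₀ mono cadd (u k) v x)
  intro x
  have : (fun k => Q P x₀ (u k) x)
      = fun k => ((P (u k) x - P v x) - (P (u k) x₀ - P v x₀)) + (P v x - P v x₀) := by
    funext k; simp only [Q]; ring
  rw [this]
  have := ((key x).sub (key x₀)).add (tendsto_const_nhds (x := P v x - P v x₀))
  simpa [Q] using this

include mono cadd in
lemma tendsto_Qiter {u : ℕ → Fin N → ℝ} {v : Fin N → ℝ} (t : ℕ)
    (hu : ∀ x, Tendsto (fun k => u k x) atTop (nhds (v x))) :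
    ∀ x, Tendsto (fun k => (Q P x₀)^[t] (u k) x) atTop (nhds ((Q P x₀)^[t] v x)) := by
  induction t with
  | zero => simpa using hu
  | succ t ih =>
    intro x
    have := tendsto_Q x₀ mono cadd (u := fun k => (Q P x₀)^[t] (u k)) (v := (Q P x₀)^[t] v) ih x
    simpa [Function.iterate_succ_apply'] using this


include mono smono cadd in
lemma growth (g : Fin N → ℝ) (L : ℝ) (hL : 0 < L)
    (hDt : ∀ t, osc x₀ (fun x => (Q P x₀)^[t + 1] g x - (Q P x₀)^[t] g x) = L) :
    ∃ T : ℕ, ∀ k : ℕ, (k : ℝ) * L ≤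
      osc x₀ (fun x => (Q P x₀)^[T + k] g x - (Q P x₀)^[T] g x) := by
  classical
  set a : ℕ → Fin N → ℝ := fun t => (Q P x₀)^[t] g with ha
  set D : ℕ → Fin N → ℝ := fun t => fun x => a (t + 1) x - a t x with hD
  set M : ℕ → ℝ := fun t => mx x₀ (D t) with hM
  set m : ℕ → ℝ := fun t => mn x₀ (D t) with hm
  have hDt' : ∀ t, osc x₀ (D t) = L := fun t => hDt t
  have hosc : ∀ t, M t - m t = L := fun t => hDt' t
  set E : ℕ → Fin N → ℝ := fun t => fun x => P (a (t + 1)) x - P (a t) x with hE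
  have hD1 : ∀ t x, D (t + 1) x = E t x - E t x₀ := by
    intro t x
    show a (t + 2) x - a (t + 1) x = E t x - E t x₀
    have h2 : a (t + 2) = Q P x₀ (a (t + 1)) := Function.iterate_succ_apply' _ _ _
    have h1 : a (t + 1) = Q P x₀ (a t) := Function.iterate_succ_apply' _ _ _
    simp only [hE]
    rw [h2, h1]
    simp only [Q]
    ring
  have hEhi : ∀ t x, E t x ≤ M t := fun t x =>
    sandwich_hi x₀ mono cadd (a (t + 1)) (a t) x
  have hElo : ∀ t x, m t ≤ E t x := fun t x =>
    sandwich_lo x₀ mono cadd (a (t + 1)) (a t) x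
  have hmxE : ∀ t, mx x₀ (E t) = M t ∧ mn x₀ (E t) = m t := by
    intro t
    have h1 : mx x₀ (E t) ≤ M t := mx_le (hEhi t)
    have h2 : m t ≤ mn x₀ (E t) := le_mn (hElo t)
    have h3 : mx x₀ (E t) - mn x₀ (E t) = L := by
      have e1 : mx x₀ (D (t + 1)) = mx x₀ (E t) - E t x₀ := by
        rw [show D (t + 1) = fun x => E t x - E t x₀ from funext (hD1 t)]
        exact mx_sub_const _ _
      have e2 : mn x₀ (D (t + 1)) = mn x₀ (E t) - E t x₀ := by
        rw [show D (t + 1) = fun x => E t x - E t x₀ from funext (hD1 t)]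
        exact mn_sub_const _ _
      have := hDt' (t + 1)
      simp only [osc] at this
      rw [e1, e2] at this
      linarith
    constructor <;> linarith [hosc t]
  have hM1 : ∀ t, M (t + 1) = M t - E t x₀ := by
    intro t
    show mx x₀ (D (t + 1)) = M t - E t x₀
    rw [show D (t + 1) = fun x => E t x - E t x₀ from funext (hD1 t), mx_sub_const,
      (hmxE t).1]
  have hm1 : ∀ t, m (t + 1) = m t - E t x₀ := by
    intro t
    show mn x₀ (D (t + 1)) = m t - E t x₀
    rw [show D (t + 1) = fun x => E t x - E t x₀ from funext (hD1 t), mn_sub_const,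
      (hmxE t).2]
  have claimA : ∀ t x, D (t + 1) x = M (t + 1) → D t x = M t := by
    intro t x h
    have hEx : E t x = M t := by
      rw [hD1 t x, hM1 t] at h; linarith
    by_contra hne
    have hlt : D t x < M t := lt_of_le_of_ne (le_mx (D t) x) hne
    have : E t x < M t :=
      strict_hi cadd smono (fun y => le_mx (D t) y) hlt
    linarith
  have claimB : ∀ t x, D (t + 1) x = m (t + 1) → D t x = m t := by
    intro t x h
    have hEx : E t x = m t := by
      rw [hD1 t x, hm1 t] at h; linarith
    by_contra hne
    have hlt : m t < D t x := lt_of_le_of_ne (mn_le (D t) x) (Ne.symm hne)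
    have : m t < E t x :=
      strict_lo cadd smono (fun y => mn_le (D t) y) hlt
    linarith
  -- argmax/argmin finsets
  set A : ℕ → Finset (Fin N) := fun t => univ.filter (fun x => D t x = M t) with hA
  set B : ℕ → Finset (Fin N) := fun t => univ.filter (fun x => D t x = m t) with hB
  have hAne : ∀ t, (A t).Nonempty := by
    intro t
    obtain ⟨x, hx⟩ := exists_mx (x₀ := x₀) (D t)
    exact ⟨x, by simp [hA, hx]; rfl⟩
  have hBne : ∀ t, (B t).Nonempty := by
    intro t
    obtain ⟨x, hx⟩ := exists_mn (x₀ := x₀) (D t)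
    exact ⟨x, by simp [hB, hx]; rfl⟩
  have hAsub : ∀ t, A (t + 1) ⊆ A t := by
    intro t x hx
    simp only [hA, mem_filter, mem_univ, true_and] at hx ⊢
    exact claimA t x hx
  have hBsub : ∀ t, B (t + 1) ⊆ B t := by
    intro t x hx
    simp only [hB, mem_filter, mem_univ, true_and] at hx ⊢
    exact claimB t x hx
  have hAchain : ∀ s t, s ≤ t → A t ⊆ A s := by
    intro s t hst
    obtain ⟨d, rfl⟩ := Nat.exists_eq_add_of_le hst
    induction d with
    | zero => simp
    | succ d ih =>
      exact Finset.Subset.trans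
        (by rw [show s + (d+1) = (s+d) + 1 from rfl]; exact hAsub (s + d))
        (ih (by omega))
  have hBchain : ∀ s t, s ≤ t → B t ⊆ B s := by
    intro s t hst
    obtain ⟨d, rfl⟩ := Nat.exists_eq_add_of_le hst
    induction d with
    | zero => simp
    | succ d ih =>
      exact Finset.Subset.trans
        (by rw [show s + (d+1) = (s+d) + 1 from rfl]; exact hBsub (s + d))
        (ih (by omega))
  -- stabilization
  obtain ⟨TA, hTA⟩ : ∃ T, (A T).card = sInf (Set.range fun t => (A t).card) := by
    have : sInf (Set.range fun t => (A t).card) ∈ Set.range fun t => (A t).card :=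
      Nat.sInf_mem ⟨(A 0).card, ⟨0, rfl⟩⟩
    obtain ⟨T, hT⟩ := this
    exact ⟨T, hT⟩
  obtain ⟨TB, hTB⟩ : ∃ T, (B T).card = sInf (Set.range fun t => (B t).card) := by
    have : sInf (Set.range fun t => (B t).card) ∈ Set.range fun t => (B t).card :=
      Nat.sInf_mem ⟨(B 0).card, ⟨0, rfl⟩⟩
    obtain ⟨T, hT⟩ := this
    exact ⟨T, hT⟩
  have hAstab : ∀ t, TA ≤ t → A t = A TA := by
    intro t ht
    refine Finset.eq_of_subset_of_card_le (hAchain TA t ht) ?_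
    rw [hTA]
    exact Nat.sInf_le ⟨t, rfl⟩
  have hBstab : ∀ t, TB ≤ t → B t = B TB := by
    intro t ht
    refine Finset.eq_of_subset_of_card_le (hBchain TB t ht) ?_
    rw [hTB]
    exact Nat.sInf_le ⟨t, rfl⟩
  set T := max TA TB with hT
  obtain ⟨x₁, hx₁⟩ := hAne T
  obtain ⟨y₁, hy₁⟩ := hBne T
  have hDx : ∀ t, T ≤ t → D t x₁ = M t := by
    intro t ht
    have : A t = A T := by
      rw [hAstab t (le_trans (le_max_left _ _) ht), hAstab T (le_max_left _ _)]
    have hx : x₁ ∈ A t := this ▸ hx₁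
    simpa [hA] using hx
  have hDy : ∀ t, T ≤ t → D t y₁ = m t := by
    intro t ht
    have : B t = B T := by
      rw [hBstab t (le_trans (le_max_right _ _) ht), hBstab T (le_max_right _ _)]
    have hy : y₁ ∈ B t := this ▸ hy₁
    simpa [hB] using hy
  -- telescoping
  have tele : ∀ k : ℕ,
      (a (T + k) x₁ - a T x₁) - (a (T + k) y₁ - a T y₁) = (k : ℝ) * L := by
    intro k
    induction k with
    | zero => simp
    | succ k ih =>
      have hx : a (T + k + 1) x₁ - a (T + k) x₁ = M (T + k) := hDx (T + k) (by omega)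
      have hy : a (T + k + 1) y₁ - a (T + k) y₁ = m (T + k) := hDy (T + k) (by omega)
      have hMm := hosc (T + k)
      have harith : (T + (k + 1)) = (T + k) + 1 := rfl
      rw [harith]
      push_cast
      push_cast at ih
      linarith
  refine ⟨T, fun k => ?_⟩
  have h1 : a (T + k) x₁ - a T x₁ ≤ mx x₀ (fun x => a (T + k) x - a T x) :=
    le_mx (fun x => a (T + k) x - a T x) x₁
  have h2 : mn x₀ (fun x => a (T + k) x - a T x) ≤ a (T + k) y₁ - a T y₁ :=
    mn_le (fun x => a (T + k) x - a T x) y₁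
  have h3 := tele k
  show (k : ℝ) * L ≤ osc x₀ (fun x => a (T + k) x - a T x)
  simp only [osc]
  linarith

end Pmap

end Stmt1Aux

open Stmt1Aux

theorem stmt1 (N : ℕ) (hN : 1 ≤ N) (x₀ : Fin N) (P : (Fin N → ℝ) → (Fin N → ℝ))
    (mono : ∀ f g : Fin N → ℝ, (∀ x, g x ≤ f x) → ∀ x, P g x ≤ P f x)
    (smono : ∀ f g : Fin N → ℝ, (∀ x, g x ≤ f x) → ∀ x, g x < f x → P g x < P f x)
    (cadd : ∀ (f : Fin N → ℝ) (c : ℝ), P (fun x => f x + c) = fun x => P f x + c)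
    (f g : Fin N → ℝ) (φ : ℕ → ℕ) (hφ : StrictMono φ)
    (hacc : Tendsto (fun k => fun x => P^[φ k] f x - P^[φ k] f x₀) atTop (nhds g)) :
    Tendsto (fun n => fun x => P^[n] f x - P^[n] f x₀) atTop (nhds g) := by
  classical
  set F : ℕ → Fin N → ℝ := fun n => fun x => P^[n] f x - P^[n] f x₀ with hFdef
  have hQF : ∀ n, F (n + 1) = Q P x₀ (F n) := by
    intro n
    funext x
    have hFn : F n = fun y => P^[n] f y + -(P^[n] f x₀) := by
      funext y; simp [hFdef, sub_eq_add_neg]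
    have hc : P (F n) = fun y => P (P^[n] f) y - P^[n] f x₀ := by
      rw [hFn, cadd (P^[n] f) (-(P^[n] f x₀))]
      funext y; ring
    show P^[n + 1] f x - P^[n + 1] f x₀ = P (F n) x - P (F n) x₀
    rw [Function.iterate_succ_apply']
    simp only [hc]
    ring
  have hFiter : ∀ n k, F (n + k) = (Q P x₀)^[k] (F n) := by
    intro n k
    induction k with
    | zero => simp
    | succ k ih =>
      rw [show n + (k + 1) = (n + k) + 1 from rfl, hQF (n + k), ih,
        ← Function.iterate_succ_apply' (Q P x₀) k (F n)]
  have hacc' : Tendsto (fun k => F (φ k)) atTop (nhds g) := hacc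
  have hcc : ∀ x, Tendsto (fun k => F (φ k) x) atTop (nhds (g x)) :=
    tendsto_pi_nhds.mp hacc'
  have hg0 : g x₀ = 0 := by
    have h0 : (fun k => F (φ k) x₀) = fun _ => (0 : ℝ) := funext fun k => sub_self _
    have := hcc x₀
    rw [h0] at this
    exact tendsto_nhds_unique this tendsto_const_nhds
  have hat : ∀ t x, Tendsto (fun k => F (φ k + t) x) atTop (nhds ((Q P x₀)^[t] g x)) := by
    intro t x
    have h2 := tendsto_Qiter x₀ mono cadd (u := fun k => F (φ k)) (v := g) t hcc x
    have h3 : (fun k => F (φ k + t) x) = fun k => (Q P x₀)^[t] (F (φ k)) x :=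
      funext fun k => by rw [hFiter (φ k) t]
    rwa [h3]
  set e : ℕ → ℝ := fun n => osc x₀ (fun x => F (n + 1) x - F n x) with he
  have eAnti : Antitone e := by
    apply antitone_nat_of_succ_le
    intro n
    have key : (fun x => F (n + 1 + 1) x - F (n + 1) x)
        = fun x => Q P x₀ (F (n + 1)) x - Q P x₀ (F n) x := by
      rw [hQF (n + 1), hQF n]
    show osc x₀ (fun x => F (n + 1 + 1) x - F (n + 1) x)
      ≤ osc x₀ (fun x => F (n + 1) x - F n x)
    rw [key]
    exact osc_Q_le x₀ mono cadd (F (n + 1)) (F n)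
  have he0 : ∀ n, 0 ≤ e n := fun n => osc_nonneg _
  have hbdd : BddBelow (Set.range e) := ⟨0, by rintro v ⟨n, rfl⟩; exact he0 n⟩
  set L : ℝ := ⨅ n, e n with hLdef
  have htL : Tendsto e atTop (nhds L) := tendsto_atTop_ciInf eAnti hbdd
  have hL0 : 0 ≤ L := le_ciInf he0
  have hDt : ∀ t, osc x₀ (fun x => (Q P x₀)^[t + 1] g x - (Q P x₀)^[t] g x) = L := by
    intro t
    have hsub : Tendsto (fun k => φ k + t) atTop atTop :=
      tendsto_atTop_mono (fun k => le_trans hφ.le_apply (Nat.le_add_right _ t)) tendsto_id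
    have h1 : Tendsto (fun k => e (φ k + t)) atTop (nhds L) := htL.comp hsub
    have h2 : Tendsto (fun k => e (φ k + t)) atTop
        (nhds (osc x₀ (fun x => (Q P x₀)^[t + 1] g x - (Q P x₀)^[t] g x))) := by
      apply tendsto_osc
      intro x
      have ha1 : Tendsto (fun k => F (φ k + t + 1) x) atTop
          (nhds ((Q P x₀)^[t + 1] g x)) := hat (t + 1) x
      exact ha1.sub (hat t x)
    exact tendsto_nhds_unique h2 h1
  -- convergence of osc (F (φ j) - g) to 0
  have htail1 : Tendsto (fun j => osc x₀ (fun z => F (φ j) z - g z)) atTop (nhds 0) := by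
    have h1 : Tendsto (fun j => osc x₀ (fun z => F (φ j) z - g z)) atTop
        (nhds (osc x₀ (fun z => g z - g z))) :=
      tendsto_osc (fun x => (hcc x).sub tendsto_const_nhds)
    rwa [show (fun z => g z - g z) = fun _ : Fin N => (0 : ℝ) from
      funext fun z => sub_self _, osc_const_zero] at h1
  have htail2 : Tendsto (fun j => osc x₀ (fun z => g z - F (φ j) z)) atTop (nhds 0) := by
    have h1 : Tendsto (fun j => osc x₀ (fun z => g z - F (φ j) z)) atTop
        (nhds (osc x₀ (fun z => g z - g z))) :=
      tendsto_osc (fun x => tendsto_const_nhds.sub (hcc x))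
    rwa [show (fun z => g z - g z) = fun _ : Fin N => (0 : ℝ) from
      funext fun z => sub_self _, osc_const_zero] at h1
  -- L = 0
  have hLeq : L = 0 := by
    by_contra hne
    have hLpos : 0 < L := lt_of_le_of_ne hL0 (Ne.symm hne)
    obtain ⟨T, hgrow⟩ := growth x₀ mono cadd smono g L hLpos hDt
    -- eventual smallness
    have hev : ∀ᶠ j in atTop, osc x₀ (fun z => F (φ j) z - g z) < L / 4
        ∧ osc x₀ (fun z => g z - F (φ j) z) < L / 4 :=
      (htail1.eventually_lt_const (by linarith)).and
        (htail2.eventually_lt_const (by linarith))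
    obtain ⟨i₀, hi₀⟩ := eventually_atTop.mp hev
    set i := i₀ with hi
    set k := φ (i + 1) - φ i with hk
    have hφlt : φ i < φ (i + 1) := hφ (Nat.lt_succ_self i)
    have hk1 : 1 ≤ k := by omega
    have hik : φ i + k = φ (i + 1) := by omega
    -- bound osc (Q^[k] g - g)
    have hck : osc x₀ (fun x => (Q P x₀)^[k] g x - g x)
        ≤ osc x₀ (fun z => F (φ (i + 1)) z - g z)
          + osc x₀ (fun z => g z - F (φ i) z) := by
      have hkey : Tendsto (fun m => osc x₀ (fun z => F (φ m + k) z - F (φ m) z)) atTop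
          (nhds (osc x₀ (fun x => (Q P x₀)^[k] g x - g x))) := by
        apply tendsto_osc
        intro x
        have h0 : Tendsto (fun m => F (φ m) x) atTop (nhds (g x)) := hcc x
        exact (hat k x).sub h0
      apply le_of_tendsto hkey
      filter_upwards [eventually_ge_atTop i] with m hm
      have hφm : φ i ≤ φ m := hφ.monotone hm
      have hmd : φ m = φ i + (φ m - φ i) := by omega
      have step1 : osc x₀ (fun z => F (φ m + k) z - F (φ m) z)
          ≤ osc x₀ (fun z => F (φ i + k) z - F (φ i) z) := by
        rw [hmd, show φ i + (φ m - φ i) + k = (φ i + k) + (φ m - φ i) from by omega,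
          hFiter (φ i + k) (φ m - φ i), hFiter (φ i) (φ m - φ i)]
        exact osc_Qiter_le x₀ mono cadd (φ m - φ i) (F (φ i + k)) (F (φ i))
      refine step1.trans ?_
      rw [hik]
      have htri : (fun z => F (φ (i + 1)) z - F (φ i) z)
          = fun z => (F (φ (i + 1)) z - g z) + (g z - F (φ i) z) := by
        funext z; ring
      rw [htri]
      exact osc_add_le _ _
    -- growth bound
    have hb1 := hgrow k
    have hb2 : osc x₀ (fun x => (Q P x₀)^[T + k] g x - (Q P x₀)^[T] g x)
        ≤ osc x₀ (fun x => (Q P x₀)^[k] g x - g x) := by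
      have hQadd : (fun x => (Q P x₀)^[T + k] g x - (Q P x₀)^[T] g x)
          = fun x => (Q P x₀)^[T] ((Q P x₀)^[k] g) x - (Q P x₀)^[T] g x := by
        funext x; rw [Function.iterate_add_apply]
      rw [hQadd]
      exact osc_Qiter_le x₀ mono cadd T ((Q P x₀)^[k] g) g
    obtain ⟨h1, h2⟩ := hi₀ (i + 1) (by omega)
    obtain ⟨h3, h4⟩ := hi₀ i le_rfl
    have hkL : (1 : ℝ) * L ≤ (k : ℝ) * L := by
      apply mul_le_mul_of_nonneg_right _ (le_of_lt hLpos)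
      exact_mod_cast hk1
    linarith
  -- Q g = g
  have hQg : Q P x₀ g = g := by
    have h0 := hDt 0
    rw [hLeq] at h0
    set h : Fin N → ℝ := fun x => Q P x₀ g x - g x with hh
    have h0' : osc x₀ h = 0 := h0
    have hmxmn : mx x₀ h = mn x₀ h := by
      have : mx x₀ h - mn x₀ h = 0 := h0'
      linarith
    have hall : ∀ x, h x = h x₀ := by
      intro x
      have a1 : h x ≤ mx x₀ h := le_mx h x
      have a2 : mn x₀ h ≤ h x := mn_le h x
      have a3 : h x₀ ≤ mx x₀ h := le_mx h x₀
      have a4 : mn x₀ h ≤ h x₀ := mn_le h x₀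
      linarith [hmxmn]
    have hx₀ : h x₀ = 0 := by
      show Q P x₀ g x₀ - g x₀ = 0
      rw [hg0]
      simp [Q]
    funext x
    have := hall x
    rw [hx₀] at this
    have : Q P x₀ g x - g x = 0 := this
    linarith
  have hQk : ∀ d, (Q P x₀)^[d] g = g := by
    intro d
    induction d with
    | zero => rfl
    | succ d ih => rw [Function.iterate_succ_apply', ih, hQg]
  -- final convergence
  have hs : Tendsto (fun n => osc x₀ (fun z => F n z - g z)) atTop (nhds 0) := by
    rw [Metric.tendsto_atTop]
    intro ε hε
    obtain ⟨j, hj⟩ := (htail1.eventually_lt_const hε).exists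
    refine ⟨φ j, fun n hn => ?_⟩
    have hle : osc x₀ (fun z => F n z - g z) ≤ osc x₀ (fun z => F (φ j) z - g z) := by
      have hnd : n = φ j + (n - φ j) := by omega
      rw [hnd, hFiter (φ j) (n - φ j),
        show (fun z => (Q P x₀)^[n - φ j] (F (φ j)) z - g z)
          = fun z => (Q P x₀)^[n - φ j] (F (φ j)) z - (Q P x₀)^[n - φ j] g z from by
            rw [hQk (n - φ j)]]
      exact osc_Qiter_le x₀ mono cadd (n - φ j) (F (φ j)) g
    rw [Real.dist_eq, sub_zero, abs_of_nonneg (osc_nonneg _)]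
    exact lt_of_le_of_lt hle hj
  rw [tendsto_pi_nhds]
  intro x
  have h1 : Tendsto (fun n => F n x - g x) atTop (nhds 0) := by
    apply squeeze_zero_norm _ hs
    intro n
    have hz : F n x₀ - g x₀ = 0 := by
      rw [hg0]; simp [hFdef]
    have hb := abs_le_osc (x₀ := x₀) (h := fun z => F n z - g z) hz x
    simpa [Real.norm_eq_abs] using hb
  have h2 := h1.add (tendsto_const_nhds (x := g x))
  simpa using h2
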